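/- arXiv:1901.07917 — 2 statements merged into one kernel-verified Lean document; each statement's English description precedes it below -/
import Mathlib

section
/- If the set of exponents Λ admits an integral basis (i.e., every λⱼ ∈ Λ is a ℤ-linear combination of the basis elements), then two coefficient sequences are *∼-equivalent if and only if they are Bohr-equivalent, i.e., there exists a single ℚ-linear map ψ : V → ℝ (V the ℚ-span of Λ) with bⱼ = aⱼ e^{iψ(λⱼ)} for all j. -/
noncomputable section

/-- exp(I·∑ zₖ θₖ) = ∏ exp(I θₖ)^zₖ for a finitely supported integer family. -/
lemma exp_I_finsupp_zsmul_sum {ι : Type*} (c : ι →₀ ℤ) (θ : ι → ℝ) :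
    Complex.exp (Complex.I * ((c.sum fun k z => z • θ k : ℝ) : ℂ)) =
      ∏ k ∈ c.support, Complex.exp (Complex.I * θ k) ^ (c k) := by
  rw [Finsupp.sum]
  push_cast
  simp only [zsmul_eq_mul]
  rw [Finset.mul_sum, Complex.exp_sum]
  refine Finset.prod_congr rfl fun k _ => ?_
  rw [← Complex.exp_int_mul]
  ring_nf

def StarEquiv (lam : ℕ → ℝ) (a b : ℕ → ℂ) : Prop :=
  ∀ n : ℕ, 1 ≤ n →
    ∃ ψ : (Submodule.span ℚ (lam '' {j : ℕ | j < n})) →ₗ[ℚ] ℝ,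
      ∀ j : ℕ, ∀ hj : j < n,
        b j = a j * Complex.exp
          (Complex.I * (ψ ⟨lam j, Submodule.subset_span (Set.mem_image_of_mem lam hj)⟩))

/-- Bohr equivalence of coefficient sequences: a single `ℚ`-linear map `ψ` on the `ℚ`-span of
all the exponents with `b j = a j * exp (i ψ (lam j))` for every `j`. -/
def BohrEquivSeq (lam : ℕ → ℝ) (a b : ℕ → ℂ) : Prop :=
  ∃ ψ : (Submodule.span ℚ (Set.range lam)) →ₗ[ℚ] ℝ,
    ∀ j : ℕ, b j = a j * Complex.exp
      (Complex.I * (ψ ⟨lam j, Submodule.subset_span (Set.mem_range_self j)⟩))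

/-- If the set of exponents admits an integral basis (a `ℚ`-linearly independent family `g`
spanning the same `ℚ`-vector space as the exponents, such that every exponent is a
`ℤ`-linear combination of the `g k`'s), then `*∼`-equivalence coincides with
Bohr equivalence. -/
theorem starEquiv_iff_bohrEquiv_of_integralBasis {ι : Type*} (lam : ℕ → ℝ) (a b : ℕ → ℂ)
    (g : ι → ℝ) (hli : LinearIndependent ℚ g)
    (hspan : Submodule.span ℚ (Set.range g) = Submodule.span ℚ (Set.range lam))
    (hint : ∀ j : ℕ, lam j ∈ Submodule.span ℤ (Set.range g)) :
    StarEquiv lam a b ↔ BohrEquivSeq lam a b := by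
  constructor
  · intro h
    -- extend each finite-stage map to a ℚ-linear map on all of ℝ
    have hF : ∀ n : ℕ, ∃ F : ℝ →ₗ[ℚ] ℝ,
        ∀ j : ℕ, j ≤ n → b j = a j * Complex.exp (Complex.I * F (lam j)) := by
      intro n
      obtain ⟨ψ, hψ⟩ := h (n + 1) (Nat.le_add_left 1 n)
      obtain ⟨F, hFc⟩ := LinearMap.exists_extend ψ
      refine ⟨F, fun j hj => ?_⟩
      have hj' : j < n + 1 := Nat.lt_succ_of_le hj
      have hthis : F (lam j) =
          ψ ⟨lam j, Submodule.subset_span (Set.mem_image_of_mem lam hj')⟩ :=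
        LinearMap.congr_fun hFc
          ⟨lam j, Submodule.subset_span (Set.mem_image_of_mem lam hj')⟩
      rw [hψ j hj', hthis]
    choose F hFs using hF
    -- integer coordinates of each exponent
    have hcc : ∀ j : ℕ, ∃ c : ι →₀ ℤ, (c.sum fun k z => z • g k) = lam j := fun j =>
      Finsupp.mem_span_range_iff_exists_finsupp.mp (hint j)
    choose c hc using hcc
    -- for any ℚ-linear F, exp(I F(lam j)) is an integer-power product over the basis values
    have key : ∀ (F : ℝ →ₗ[ℚ] ℝ) (j : ℕ),
        Complex.exp (Complex.I * F (lam j)) =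
          ∏ k ∈ (c j).support, Complex.exp (Complex.I * F (g k)) ^ (c j k) := by
      intro F j
      have h1 : F (lam j) = ((c j).sum fun k z => z • F (g k)) := by
        rw [← hc j, map_finsuppSum]
        exact Finsupp.sum_congr fun k _ => map_zsmul F _ _
      rw [h1, exp_I_finsupp_zsmul_sum (c j) (fun k => F (g k))]
    -- compactness: ultrafilter limit of the circle-valued basis data
    set x : ℕ → (ι → Circle) := fun n k => Circle.exp (F n (g k)) with hxdef
    set U : Ultrafilter ℕ := Filter.hyperfilter ℕ with hU
    obtain ⟨t, -, ht⟩ := isCompact_univ.ultrafilter_le_nhds (U.map x)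
      (by simp [Filter.le_principal_iff])
    have htt : Filter.Tendsto x U (nhds t) := ht
    -- the limiting product identity
    have hprod : ∀ j : ℕ, a j ≠ 0 →
        (∏ k ∈ (c j).support, ((t k : ℂ)) ^ (c j k)) = b j / a j := by
      intro j haj
      have hcont : Continuous fun u : ι → Circle =>
          ∏ k ∈ (c j).support, ((u k : ℂ)) ^ (c j k) := by
        refine continuous_finset_prod _ fun k _ => ?_
        exact (continuous_subtype_val.comp (continuous_apply k)).zpow₀ _
          (fun u => Or.inl (Circle.coe_ne_zero _))
      have h2 : Filter.Tendsto (fun n => ∏ k ∈ (c j).support, ((x n k : ℂ)) ^ (c j k)) U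
          (nhds (∏ k ∈ (c j).support, ((t k : ℂ)) ^ (c j k))) :=
        (hcont.tendsto t).comp htt
      have hev : ∀ᶠ n in (U : Filter ℕ),
          (∏ k ∈ (c j).support, ((x n k : ℂ)) ^ (c j k)) = b j / a j := by
        have : ∀ n, j ≤ n → (∏ k ∈ (c j).support, ((x n k : ℂ)) ^ (c j k)) = b j / a j := by
          intro n hn
          have hx : ∀ k, ((x n k : ℂ)) = Complex.exp (Complex.I * F n (g k)) := by
            intro k
            rw [show x n k = Circle.exp (F n (g k)) from rfl, Circle.coe_exp]
            ring_nf
          have : (∏ k ∈ (c j).support, ((x n k : ℂ)) ^ (c j k)) =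
              Complex.exp (Complex.I * F n (lam j)) := by
            rw [key (F n) j]
            exact Finset.prod_congr rfl fun k _ => by rw [hx k]
          rw [this, eq_div_iff haj]
          linear_combination (hFs n j hn).symm
        have hcof : (U : Filter ℕ) ≤ Filter.cofinite := by
          rw [hU]; exact Filter.hyperfilter_le_cofinite
        exact Filter.Eventually.filter_mono hcof
          (by rw [Nat.cofinite_eq_atTop]
              exact (Filter.eventually_ge_atTop j).mono this)
      exact tendsto_nhds_unique h2
        (Filter.Tendsto.congr' (hev.mono fun n hn => hn.symm) tendsto_const_nhds)
    -- choose arguments for the limit circle points and build the global linear map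
    set θ : ι → ℝ := fun k => Complex.arg ((t k : ℂ)) with hθ
    have hexpθ : ∀ k, Circle.exp (θ k) = t k := fun k => Circle.exp_arg (t k)
    set B : Module.Basis ι ℚ (Submodule.span ℚ (Set.range g)) := Module.Basis.span hli with hB
    set e : (Submodule.span ℚ (Set.range g)) ≃ₗ[ℚ] (Submodule.span ℚ (Set.range lam)) :=
      LinearEquiv.ofEq _ _ hspan with he
    set B' : Module.Basis ι ℚ (Submodule.span ℚ (Set.range lam)) := B.map e with hB'
    refine ⟨B'.constr ℚ θ, fun j => ?_⟩
    have hBg : ∀ k, ((B' k : ℝ)) = g k := by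
      intro k
      rw [hB', Module.Basis.map_apply, he]
      show ((B k : ℝ)) = g k
      rw [hB]
      exact congrArg Subtype.val (Module.Basis.span_apply hli k)
    -- express the exponent vector in terms of the basis inside the submodule
    have hrep' : ((((c j).sum fun k z => z • B' k) :
        Submodule.span ℚ (Set.range lam)) : ℝ) = lam j := by
      rw [show ((((c j).sum fun k z => z • B' k) :
            Submodule.span ℚ (Set.range lam)) : ℝ) =
          (Submodule.span ℚ (Set.range lam)).subtype
            ((c j).sum fun k z => z • B' k) from rfl, map_finsuppSum, ← hc j]
      refine Finsupp.sum_congr fun k _ => ?_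
      rw [map_zsmul]
      show (c j) k • ((B' k : ℝ)) = _
      rw [hBg k]
    have hrep : (⟨lam j, Submodule.subset_span (Set.mem_range_self j)⟩ :
        Submodule.span ℚ (Set.range lam)) = (c j).sum fun k z => z • B' k :=
      Subtype.ext hrep'.symm
    have hψval : (B'.constr ℚ θ) ⟨lam j, Submodule.subset_span (Set.mem_range_self j)⟩
        = (c j).sum fun k z => z • θ k := by
      rw [hrep, map_finsuppSum]
      refine Finsupp.sum_congr fun k _ => ?_
      rw [map_zsmul, Module.Basis.constr_basis]
    rw [hψval]
    by_cases haj : a j = 0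
    · have hb0 : b j = 0 := by
        obtain ⟨ψ, hψ⟩ := h (j + 1) (Nat.le_add_left 1 j)
        rw [hψ j (Nat.lt_succ_self j), haj, zero_mul]
      rw [hb0, haj, zero_mul]
    · have : Complex.exp (Complex.I * ((c j).sum fun k z => z • θ k : ℝ)) = b j / a j := by
        rw [exp_I_finsupp_zsmul_sum (c j) θ]
        rw [← hprod j haj]
        refine Finset.prod_congr rfl fun k _ => ?_
        rw [← hexpθ k, Circle.coe_exp]
        ring_nf
      rw [this, mul_div_cancel₀ _ haj]
  · -- easy direction: restrict the global map to each finite stage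
    rintro ⟨ψ, hψ⟩ n hn
    refine ⟨ψ.comp (Submodule.inclusion (Submodule.span_mono (by
      rintro _ ⟨j, -, rfl⟩; exact Set.mem_range_self j))), fun j hj => ?_⟩
    rw [hψ j]
    rfl
end
end

section
/- For the exponent set λⱼ = 2j − 1 + 1/(2(2j−1)), j = 1, 2, …, the constant coefficient sequences aⱼ = 1 and bⱼ = −1 are *∼-equivalent: for each n there exists a ℚ-linear map ψₙ on the ℚ-span of {λ₁,…,λₙ} with e^{iψₙ(λⱼ)} = −1 for j = 1,…,n. -/
noncomputable section

/-- The exponents `λⱼ = 2j − 1 + 1/(2(2j−1))`, `j = 1, 2, …` (here indexed by `ℕ` starting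
from `0`, so `lam j` is the `(j+1)`-st exponent). -/
def lamEx (j : ℕ) : ℝ := (2 * (j : ℝ) + 1) + 1 / (2 * (2 * (j : ℝ) + 1))

/-- For the exponents `λⱼ = 2j − 1 + 1/(2(2j−1))`, the constant sequences `aⱼ = 1` and
`bⱼ = −1` are `*∼`-equivalent. -/
theorem starEquiv_one_negOne : StarEquiv lamEx (fun _ => (1 : ℂ)) (fun _ => (-1 : ℂ)) := by
  intro n hn
  set M : ℕ := ∏ k ∈ Finset.range n, (2 * k + 1) with hM
  refine ⟨(2 * Real.pi * M) • (Submodule.span ℚ _).subtype, ?_⟩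
  intro j hj
  have hmem : j ∈ Finset.range n := Finset.mem_range.mpr hj
  set Q : ℕ := ∏ k ∈ (Finset.range n).erase j, (2 * k + 1) with hQ
  have hMQ : M = (2 * j + 1) * Q := (Finset.mul_prod_erase _ _ hmem).symm
  have hQodd : Odd Q := by
    rw [hQ]
    refine Finset.prod_induction _ Odd (fun a b ha hb => Odd.mul ha hb) ⟨0, rfl⟩ ?_
    intro k _
    exact ⟨k, by ring⟩
  have h1 : (2 * (j : ℝ) + 1) ≠ 0 := by positivity
  have harith : (2 * Real.pi * M) * lamEx j
      = ((M * (2 * j + 1) : ℕ) : ℝ) * (2 * Real.pi) + (Q : ℝ) * Real.pi := by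
    rw [lamEx]
    push_cast [hMQ]
    field_simp
  simp only [LinearMap.smul_apply, Submodule.coe_subtype, smul_eq_mul]
  rw [harith, one_mul]
  push_cast
  rw [mul_add, Complex.exp_add]
  have e1 : Complex.exp (Complex.I * ((M : ℂ) * (2 * (j : ℂ) + 1) * (2 * (Real.pi : ℂ)))) = 1 := by
    have h : Complex.I * ((M : ℂ) * (2 * (j : ℂ) + 1) * (2 * (Real.pi : ℂ)))
        = ((M * (2 * j + 1) : ℕ) : ℂ) * (2 * Real.pi * Complex.I) := by push_cast; ring
    rw [h]
    exact Complex.exp_nat_mul_two_pi_mul_I _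
  have e2 : Complex.exp (Complex.I * ((Q : ℂ) * (Real.pi : ℂ))) = -1 := by
    rw [show Complex.I * ((Q : ℂ) * (Real.pi : ℂ)) = (Q : ℕ) * ((Real.pi : ℂ) * Complex.I) by ring,
      Complex.exp_nat_mul, Complex.exp_pi_mul_I]
    exact Odd.neg_one_pow hQodd
  rw [e1, e2, one_mul]
end
end
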